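/- A function f : ℤ^n → ℝ ∪ {+∞} is multimodular if and only if the function g : ℤ^n → ℝ ∪ {+∞} defined by g(p) = f(p₁, p₂ − p₁, p₃ − p₂, …, p_n − p_{n−1}) is L♮-convex; equivalently, f(x) = g(x₁, x₁+x₂, …, x₁+⋯+x_n). -/

import Mathlib

/-- Componentwise rounded-up midpoint `⌈(x+y)/2⌉` of two integer vectors. -/
def ceilMid {n : ℕ} (x y : Fin n → ℤ) : Fin n → ℤ := fun i => Int.fdiv (x i + y i + 1) 2

/-- Componentwise rounded-down midpoint `⌊(x+y)/2⌋` of two integer vectors. -/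
def floorMid {n : ℕ} (x y : Fin n → ℤ) : Fin n → ℤ := fun i => Int.fdiv (x i + y i) 2

/-- A function `f : ℤⁿ → ℝ ∪ {+∞}` (encoded into `EReal`) with nonempty effective
domain is L♮-convex if it satisfies discrete midpoint convexity. -/
def IsLNatFn {n : ℕ} (f : (Fin n → ℤ) → EReal) : Prop :=
  (∃ x, f x ≠ ⊤) ∧ ∀ x y, f (ceilMid x y) + f (floorMid x y) ≤ f x + f y

/-- Submodularity on `ℤᵐ` (with the componentwise lattice structure). -/
def Submodular {m : ℕ} (h : (Fin m → ℤ) → EReal) : Prop :=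
  ∀ u v, h (u ⊔ v) + h (u ⊓ v) ≤ h u + h v

/-- `f : ℤⁿ → ℝ ∪ {+∞}` is multimodular if
`f̃(x₀,…,x_n) = f(x₁−x₀, …, x_n−x_{n−1})` is submodular on `ℤ^{n+1}`. -/
def Multimodular {n : ℕ} (f : (Fin n → ℤ) → EReal) : Prop :=
  Submodular (fun x : Fin (n + 1) → ℤ => f (fun i : Fin n => x i.succ - x i.castSucc))

/-- The difference transform `p ↦ (p₁, p₂−p₁, …, p_n−p_{n−1})`. -/
def ddiff {n : ℕ} (p : Fin n → ℤ) : Fin n → ℤ :=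
  fun i => p i - if h : (i : ℕ) = 0 then 0
    else p ⟨(i : ℕ) - 1, Nat.lt_of_le_of_lt (Nat.sub_le _ _) i.isLt⟩

/-- The partial-sum transform `x ↦ (x₁, x₁+x₂, …, x₁+⋯+x_n)`. -/
def psum {n : ℕ} (x : Fin n → ℤ) : Fin n → ℤ :=
  fun i => ∑ j ∈ Finset.univ.filter (fun j => j ≤ i), x j

namespace MMaux

open Finset

lemma fdiv2 (a : ℤ) : Int.fdiv a 2 = a / 2 := Int.fdiv_eq_ediv_of_nonneg a (by norm_num)

/-- Submodularity plus invariance along the all-ones direction implies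
discrete midpoint convexity. -/
lemma dmc_of_submod_inv {m : ℕ} {h : (Fin m → ℤ) → EReal}
    (hs : Submodular h) (hinv : ∀ x, h (x + 1) = h x) :
    ∀ x y, h (ceilMid x y) + h (floorMid x y) ≤ h x + h y := by
  suffices H : ∀ N : ℕ, ∀ x y : Fin m → ℤ,
      ((univ.sup fun i => (x i - y i).toNat) + (univ.sup fun i => (y i - x i).toNat) ≤ N) →
      h (ceilMid x y) + h (floorMid x y) ≤ h x + h y from fun x y => H _ x y le_rfl
  intro N
  induction N using Nat.strong_induction_on with
  | _ N IH =>
  have key : ∀ x y : Fin m → ℤ,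
      ((univ.sup fun i => (x i - y i).toNat) + (univ.sup fun i => (y i - x i).toNat) ≤ N) →
      2 ≤ univ.sup (fun i => (x i - y i).toNat) →
      h (ceilMid x y) + h (floorMid x y) ≤ h x + h y := by
    intro x y hN hA
    set A := univ.sup (fun i => (x i - y i).toNat) with hAdef
    set B := univ.sup (fun i => (y i - x i).toNat) with hBdef
    set x' : Fin m → ℤ := fun i => min (x i) (y i + 1) with hx'
    set y' : Fin m → ℤ := fun i => max (x i) (y i + 1) - 1 with hy'
    have h1 : h (x ⊔ (y + 1)) + h (x ⊓ (y + 1)) ≤ h x + h (y + 1) := hs _ _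
    have h2 : h (y + 1) = h y := hinv y
    have h3 : h (x ⊔ (y + 1)) = h y' := by
      rw [← hinv y']; congr 1; funext i
      simp only [Pi.add_apply, Pi.one_apply, Pi.sup_apply, hy']
      omega
    have h4 : x ⊓ (y + 1) = x' := by
      funext i
      simp only [Pi.add_apply, Pi.one_apply, Pi.inf_apply, hx']
    have hc : ceilMid x' y' = ceilMid x y := by
      funext i; simp only [ceilMid, hx', hy', fdiv2]; omega
    have hf : floorMid x' y' = floorMid x y := by
      funext i; simp only [floorMid, hx', hy', fdiv2]; omega
    have hA' : (univ.sup fun i => (x' i - y' i).toNat) ≤ 1 := by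
      apply Finset.sup_le; intro i _
      simp only [hx', hy']; omega
    have hB' : (univ.sup fun i => (y' i - x' i).toNat) ≤ max B (A - 2) := by
      apply Finset.sup_le; intro i _
      have hiA : (x i - y i).toNat ≤ A :=
        Finset.le_sup (f := fun i => (x i - y i).toNat) (mem_univ i)
      have hiB : (y i - x i).toNat ≤ B :=
        Finset.le_sup (f := fun i => (y i - x i).toNat) (mem_univ i)
      have : (y' i - x' i).toNat ≤ max ((y i - x i).toNat) ((x i - y i).toNat - 2) := by
        simp only [hx', hy']; omega
      omega
    have hNpos : 1 ≤ N := by omega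
    calc h (ceilMid x y) + h (floorMid x y)
        = h (ceilMid x' y') + h (floorMid x' y') := by rw [hc, hf]
      _ ≤ h x' + h y' := IH (N - 1) (by omega) x' y' (by omega)
      _ = h (x ⊓ (y + 1)) + h (x ⊔ (y + 1)) := by rw [h4, h3]
      _ = h (x ⊔ (y + 1)) + h (x ⊓ (y + 1)) := add_comm _ _
      _ ≤ h x + h (y + 1) := h1
      _ = h x + h y := by rw [h2]
  intro x y hN
  by_cases hA : 2 ≤ univ.sup (fun i => (x i - y i).toNat)
  · exact key x y hN hA
  · by_cases hB : 2 ≤ univ.sup (fun i => (y i - x i).toNat)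
    · have hcomm : ceilMid y x = ceilMid x y := by
        funext i; simp only [ceilMid]; ring_nf
      have hfcomm : floorMid y x = floorMid x y := by
        funext i; simp only [floorMid]; ring_nf
      have := key y x (by omega) hB
      rw [hcomm, hfcomm] at this
      exact this.trans (le_of_eq (add_comm _ _))
    · push_neg at hA hB
      have hnear : ∀ i, (x i - y i).natAbs ≤ 1 := by
        intro i
        have h1 : (x i - y i).toNat ≤ univ.sup (fun i => (x i - y i).toNat) :=
          Finset.le_sup (f := fun i => (x i - y i).toNat) (mem_univ i)
        have h2 : (y i - x i).toNat ≤ univ.sup (fun i => (y i - x i).toNat) :=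
          Finset.le_sup (f := fun i => (y i - x i).toNat) (mem_univ i)
        omega
      have hc : ceilMid x y = x ⊔ y := by
        funext i
        simp only [ceilMid, Pi.sup_apply, fdiv2]
        have := hnear i; omega
      have hf : floorMid x y = x ⊓ y := by
        funext i
        simp only [floorMid, Pi.inf_apply, fdiv2]
        have := hnear i; omega
      rw [hc, hf]; exact hs x y

/-- Discrete midpoint convexity implies submodularity (for `⊥`-free functions). -/
lemma submod_of_dmc {m : ℕ} {h : (Fin m → ℤ) → EReal} (hb : ∀ x, h x ≠ ⊥)
    (hd : ∀ x y, h (ceilMid x y) + h (floorMid x y) ≤ h x + h y) : Submodular h := by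
  suffices H : ∀ N : ℕ, ∀ u v : Fin m → ℤ,
      ((univ.sup fun i => (u i - v i).natAbs) ≤ N) →
      h (u ⊔ v) + h (u ⊓ v) ≤ h u + h v from fun u v => H _ u v le_rfl
  intro N
  induction N using Nat.strong_induction_on with
  | _ N IH =>
  intro u v hN
  by_cases hnear : ∀ i, (u i - v i).natAbs ≤ 1
  · have hc : u ⊔ v = ceilMid u v := by
      funext i
      simp only [ceilMid, Pi.sup_apply, fdiv2]
      have := hnear i; omega
    have hf : u ⊓ v = floorMid u v := by
      funext i
      simp only [floorMid, Pi.inf_apply, fdiv2]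
      have := hnear i; omega
    rw [hc, hf]; exact hd u v
  · push_neg at hnear
    obtain ⟨i₀, hi₀⟩ := hnear
    have hdist : ∀ i, (u i - v i).natAbs ≤ N := fun i =>
      le_trans (Finset.le_sup (f := fun i => (u i - v i).natAbs) (mem_univ i)) hN
    have hN2 : 2 ≤ N := by have := hdist i₀; omega
    set c := ceilMid u v with hcdef
    set d := floorMid u v with hddef
    have hcval : ∀ i, c i = (u i + v i + 1) / 2 := fun i => fdiv2 _
    have hdval : ∀ i, d i = (u i + v i) / 2 := fun i => fdiv2 _
    have bound : ∀ w z : Fin m → ℤ, (∀ i, (w i - z i).natAbs ≤ N - 1) →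
        h (w ⊔ z) + h (w ⊓ z) ≤ h w + h z := fun w z hw =>
      IH (N - 1) (by omega) w z (Finset.sup_le fun i _ => hw i)
    have t1 := bound (u ⊔ c) (d ⊔ v) (fun i => by
      simp only [Pi.sup_apply]
      have := hdist i; have := hcval i; have := hdval i; omega)
    have t2 := bound (u ⊓ c) (d ⊓ v) (fun i => by
      simp only [Pi.inf_apply]
      have := hdist i; have := hcval i; have := hdval i; omega)
    have t3 := bound u c (fun i => by
      have := hdist i; have := hcval i; omega)
    have t4 := bound d v (fun i => by
      have := hdist i; have := hdval i; omega)
    have e1 : (u ⊔ c) ⊔ (d ⊔ v) = u ⊔ v := by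
      funext i
      simp only [Pi.sup_apply]
      have := hcval i; have := hdval i; have := hdist i; omega
    have e2 : (u ⊓ c) ⊓ (d ⊓ v) = u ⊓ v := by
      funext i
      simp only [Pi.inf_apply]
      have := hcval i; have := hdval i; have := hdist i; omega
    rw [e1] at t1
    rw [e2] at t2
    set e := (u ⊔ c) ⊓ (d ⊔ v) with hedef
    set e' := (u ⊓ c) ⊔ (d ⊓ v) with he'def
    have hee' : ∀ i, e i + e' i = u i + v i := by
      intro i
      simp only [hedef, he'def, Pi.sup_apply, Pi.inf_apply]
      have := hcval i; have := hdval i; omega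
    have hce : ceilMid e e' = c := by
      funext i; simp only [ceilMid, hcdef, fdiv2]
      have := hee' i
      have := hcval i
      omega
    have hfe : floorMid e e' = d := by
      funext i; simp only [floorMid, hddef, fdiv2]
      have := hee' i
      have := hdval i
      omega
    have t5 : h c + h d ≤ h e + h e' := by
      have := hd e e'; rw [hce, hfe] at this; exact this
    by_cases htop : h u + h v = ⊤
    · rw [htop]; exact le_top
    · have t0 : h c + h d ≤ h u + h v := hd u v
      have hr_ne_top : h c + h d ≠ ⊤ := by
        intro hcd; rw [hcd] at t0; exact htop (top_le_iff.mp t0)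
      have hr_ne_bot : h c + h d ≠ ⊥ := by
        intro hcd
        rcases EReal.add_eq_bot_iff.mp hcd with h1 | h1
        · exact hb c h1
        · exact hb d h1
      obtain ⟨s, hs⟩ : ∃ s : ℝ, h c + h d = (s : EReal) :=
        ⟨(h c + h d).toReal, (EReal.coe_toReal hr_ne_top hr_ne_bot).symm⟩
      have main : (h (u ⊔ v) + h (u ⊓ v)) + (s : EReal) ≤ (h u + h v) + (s : EReal) := by
        calc (h (u ⊔ v) + h (u ⊓ v)) + (s : EReal)
            = (h (u ⊔ v) + h (u ⊓ v)) + (h c + h d) := by rw [hs]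
          _ ≤ (h (u ⊔ v) + h (u ⊓ v)) + (h e + h e') := add_le_add le_rfl t5
          _ = (h (u ⊔ v) + h e) + (h e' + h (u ⊓ v)) := by abel
          _ ≤ (h (u ⊔ c) + h (d ⊔ v)) + (h (u ⊓ c) + h (d ⊓ v)) := add_le_add t1 t2
          _ = (h (u ⊔ c) + h (u ⊓ c)) + (h (d ⊔ v) + h (d ⊓ v)) := by abel
          _ ≤ (h u + h c) + (h d + h v) := add_le_add t3 t4
          _ = (h u + h v) + (h c + h d) := by abel
          _ = (h u + h v) + (s : EReal) := by rw [hs]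
      exact (EReal.addLECancellable_coe s).add_le_add_iff_right.mp main

lemma ddiff_psum {n : ℕ} (x : Fin n → ℤ) : ddiff (psum x) = x := by
  funext i
  simp only [ddiff, psum]
  split_ifs with h0
  · have : Finset.univ.filter (fun j => j ≤ i) = {i} := by
      ext j
      simp only [Finset.mem_filter, Finset.mem_univ, true_and, Finset.mem_singleton,
        Fin.le_def, Fin.ext_iff]
      omega
    rw [this, Finset.sum_singleton]; ring
  · have : Finset.univ.filter (fun j => j ≤ i) =
        insert i (Finset.univ.filter (fun j => j ≤
          (⟨(i : ℕ) - 1, Nat.lt_of_le_of_lt (Nat.sub_le _ _) i.isLt⟩ : Fin n))) := by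
      ext j
      simp only [Finset.mem_filter, Finset.mem_univ, true_and, Finset.mem_insert,
        Fin.le_def, Fin.ext_iff]
      omega
    rw [this, Finset.sum_insert (by
      simp only [Finset.mem_filter, Finset.mem_univ, true_and, Fin.le_def]
      omega)]
    ring

/-- Embedding `ℤⁿ → ℤ^{n+1}` with a zero prepended: `(0, p₁, …, p_n)`. -/
def emb {n : ℕ} (p : Fin n → ℤ) : Fin (n + 1) → ℤ :=
  fun j => if hj : (j : ℕ) = 0 then 0 else p ⟨(j : ℕ) - 1, by have := j.isLt; omega⟩

lemma diff_emb {n : ℕ} (p : Fin n → ℤ) :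
    (fun i : Fin n => emb p i.succ - emb p i.castSucc) = ddiff p := by
  funext i
  have h1 : emb p i.succ = p i := by
    simp only [emb, Fin.val_succ]
    rw [dif_neg (Nat.succ_ne_zero _)]
    congr 1
  have h2 : emb p i.castSucc = if h : (i : ℕ) = 0 then 0
      else p ⟨(i : ℕ) - 1, Nat.lt_of_le_of_lt (Nat.sub_le _ _) i.isLt⟩ := by
    simp only [emb, Fin.coe_castSucc]
  rw [h1, h2]
  rfl

lemma emb_ceil {n : ℕ} (p q : Fin n → ℤ) :
    ceilMid (emb p) (emb q) = emb (ceilMid p q) := by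
  funext j
  simp only [ceilMid, emb]
  split_ifs with hj
  · decide
  · rfl

lemma emb_floor {n : ℕ} (p q : Fin n → ℤ) :
    floorMid (emb p) (emb q) = emb (floorMid p q) := by
  funext j
  simp only [floorMid, emb]
  split_ifs with hj
  · decide
  · rfl

/-- The inverse-ish transform `ℤ^{n+1} → ℤⁿ`, `x ↦ (x₁ − x₀, …, x_n − x₀)`. -/
def psi {n : ℕ} (x : Fin (n + 1) → ℤ) : Fin n → ℤ := fun i => x i.succ - x 0

lemma diff_eq_ddiff_psi {n : ℕ} (x : Fin (n + 1) → ℤ) :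
    (fun i : Fin n => x i.succ - x i.castSucc) = ddiff (psi x) := by
  funext i
  simp only [ddiff, psi]
  split_ifs with h0
  · have : i.castSucc = 0 := Fin.ext (by simp [h0])
    rw [this]; ring
  · have : (⟨(i : ℕ) - 1, Nat.lt_of_le_of_lt (Nat.sub_le _ _) i.isLt⟩ : Fin n).succ
        = i.castSucc := Fin.ext (by simp; omega)
    rw [this]; ring

lemma psi_ceil_even {n : ℕ} (x y : Fin (n + 1) → ℤ) (hp : (x 0 + y 0) % 2 = 0) :
    psi (ceilMid x y) = ceilMid (psi x) (psi y) := by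
  funext i; simp only [psi, ceilMid, fdiv2]; omega

lemma psi_floor_even {n : ℕ} (x y : Fin (n + 1) → ℤ) (hp : (x 0 + y 0) % 2 = 0) :
    psi (floorMid x y) = floorMid (psi x) (psi y) := by
  funext i; simp only [psi, floorMid, fdiv2]; omega

lemma psi_ceil_odd {n : ℕ} (x y : Fin (n + 1) → ℤ) (hp : (x 0 + y 0) % 2 = 1) :
    psi (ceilMid x y) = floorMid (psi x) (psi y) := by
  funext i; simp only [psi, ceilMid, floorMid, fdiv2]; omega

lemma psi_floor_odd {n : ℕ} (x y : Fin (n + 1) → ℤ) (hp : (x 0 + y 0) % 2 = 1) :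
    psi (floorMid x y) = ceilMid (psi x) (psi y) := by
  funext i; simp only [psi, ceilMid, floorMid, fdiv2]; omega

end MMaux

theorem multimodular_iff_lnat {n : ℕ} (f : (Fin n → ℤ) → EReal)
    (hbot : ∀ x, f x ≠ ⊥) (hdom : ∃ x, f x ≠ ⊤) :
    (Multimodular f ↔ IsLNatFn (fun p => f (ddiff p))) ∧
    (∀ x : Fin n → ℤ, f x = (fun p => f (ddiff p)) (psum x)) := by
  open MMaux in
  refine ⟨⟨?_, ?_⟩, ?_⟩
  · -- Multimodular → L♮
    intro hmm
    constructor
    · obtain ⟨x, hx⟩ := hdom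
      refine ⟨psum x, ?_⟩
      simpa only [ddiff_psum] using hx
    · intro p q
      have hinv : ∀ x : Fin (n + 1) → ℤ,
          (fun x : Fin (n + 1) → ℤ => f fun i : Fin n => x i.succ - x i.castSucc) (x + 1)
            = (fun x : Fin (n + 1) → ℤ => f fun i : Fin n => x i.succ - x i.castSucc) x := by
        intro x
        simp only
        congr 1
        funext i
        simp only [Pi.add_apply, Pi.one_apply]
        ring
      have hdmc := dmc_of_submod_inv
        (h := fun x : Fin (n + 1) → ℤ => f fun i : Fin n => x i.succ - x i.castSucc)
        hmm hinv
      have key := hdmc (emb p) (emb q)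
      rw [emb_ceil, emb_floor] at key
      rw [diff_emb, diff_emb, diff_emb, diff_emb] at key
      exact key
  · -- L♮ → Multimodular
    intro hg
    have hd : ∀ x y : Fin (n + 1) → ℤ,
        (fun x : Fin (n + 1) → ℤ => f fun i : Fin n => x i.succ - x i.castSucc) (ceilMid x y)
        + (fun x : Fin (n + 1) → ℤ => f fun i : Fin n => x i.succ - x i.castSucc) (floorMid x y)
        ≤ (fun x : Fin (n + 1) → ℤ => f fun i : Fin n => x i.succ - x i.castSucc) x
        + (fun x : Fin (n + 1) → ℤ => f fun i : Fin n => x i.succ - x i.castSucc) y := by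
      intro x y
      simp only
      rw [diff_eq_ddiff_psi (ceilMid x y), diff_eq_ddiff_psi (floorMid x y),
        diff_eq_ddiff_psi x, diff_eq_ddiff_psi y]
      rcases Int.emod_two_eq (x 0 + y 0) with hp | hp
      · rw [psi_ceil_even x y hp, psi_floor_even x y hp]
        exact hg.2 (psi x) (psi y)
      · rw [psi_ceil_odd x y hp, psi_floor_odd x y hp]
        exact le_of_eq (add_comm _ _) |>.trans (hg.2 (psi x) (psi y))
    exact submod_of_dmc (fun x => hbot _) hd
  · intro x
    show f x = f (ddiff (psum x))
    rw [ddiff_psum]
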